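/- Let Ω ⊂ ℝ² be the open triangle with vertices A(−2, 1/3), B(0, 1/3), C(0, 1). Define α(x,y) = ((x y² + y − 1/9)/3)^{1/3} + 1/3 (real cube root) and z(x,y) = 1 − e^{1/α(x,y) − 1/y}. Then ∫∫_Ω (∂z/∂x(x,y))² dx dy = +∞; in particular z does not belong to H¹(Ω). -/

import Mathlib

open MeasureTheory Set Real

/-- The real (odd) cube root. -/
noncomputable def cbrt (t : ℝ) : ℝ :=
  if 0 ≤ t then t ^ ((1:ℝ)/3) else -((-t) ^ ((1:ℝ)/3))

/-- The open triangle with vertices A(−2,1/3), B(0,1/3), C(0,1):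
its sides lie on the lines y = 1/3, x = 0 and y = x/3 + 1. -/
def TriangleEx4 : Set (ℝ × ℝ) :=
  {p : ℝ × ℝ | 1/3 < p.2 ∧ p.1 < 0 ∧ p.2 < p.1 / 3 + 1}

/-- α(x,y) = ((x y² + y − 1/9)/3)^{1/3} + 1/3. -/
noncomputable def alphaEx4 : ℝ × ℝ → ℝ := fun p =>
  cbrt ((p.1 * p.2 ^ 2 + p.2 - 1/9) / 3) + 1/3

/-- The explicit solution z(x,y) = 1 − e^{1/α(x,y) − 1/y} of Example 4. -/
noncomputable def zEx4 : ℝ × ℝ → ℝ := fun p =>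
  1 - Real.exp (1 / alphaEx4 p - 1 / p.2)

/-- Partial derivative ∂z/∂x. -/
noncomputable def zEx4x (p : ℝ × ℝ) : ℝ := deriv (fun t => zEx4 (t, p.2)) p.1

/-- Partial derivative ∂z/∂y. -/
noncomputable def zEx4y (p : ℝ × ℝ) : ℝ := deriv (fun t => zEx4 (p.1, t)) p.2

/-! ### Auxiliary lemmas -/

lemma alphaEx4_eq {x y : ℝ} (hu : 0 ≤ (x * y ^ 2 + y - 1/9) / 3) :
    alphaEx4 (x, y) = ((x * y ^ 2 + y - 1/9) / 3) ^ ((1:ℝ)/3) + 1/3 := by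
  simp only [alphaEx4, cbrt, if_pos hu]

lemma zEx4x_formula {x y : ℝ} (hu : 0 < (x * y ^ 2 + y - 1/9) / 3) :
    zEx4x (x, y) =
      Real.exp (1 / alphaEx4 (x, y) - 1 / y) *
        (y ^ 2 / 3 * ((1:ℝ)/3) * ((x * y ^ 2 + y - 1/9) / 3) ^ ((1:ℝ)/3 - 1)) /
        (alphaEx4 (x, y)) ^ 2 := by
  set u : ℝ → ℝ := fun t => (t * y ^ 2 + y - 1/9) / 3 with hu_def
  have hdu : HasDerivAt u (y ^ 2 / 3) x := by
    have h2 : u = fun t : ℝ => t * (y ^ 2 / 3) + (y - 1/9) / 3 := by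
      funext t; simp only [hu_def]; ring
    rw [h2]
    simpa using ((hasDerivAt_id x).mul_const (y ^ 2 / 3)).add_const ((y - 1/9) / 3)
  have hupos : 0 < u x := hu
  have h1 : HasDerivAt (fun t => u t ^ ((1:ℝ)/3))
      (y ^ 2 / 3 * ((1:ℝ)/3) * u x ^ ((1:ℝ)/3 - 1)) x :=
    hdu.rpow_const (Or.inl hupos.ne')
  have heq : (fun t => alphaEx4 (t, y)) =ᶠ[nhds x] fun t => u t ^ ((1:ℝ)/3) + 1/3 := by
    have hc : ContinuousAt u x := hdu.continuousAt
    filter_upwards [hc.eventually_mem (Ioi_mem_nhds hupos)] with t ht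
    exact alphaEx4_eq (le_of_lt ht)
  have hα : HasDerivAt (fun t => alphaEx4 (t, y))
      (y ^ 2 / 3 * ((1:ℝ)/3) * u x ^ ((1:ℝ)/3 - 1)) x :=
    (h1.add_const (1/3)).congr_of_eventuallyEq heq
  have hαval : alphaEx4 (x, y) = u x ^ ((1:ℝ)/3) + 1/3 := alphaEx4_eq hupos.le
  have hαpos : 0 < alphaEx4 (x, y) := by
    rw [hαval]; positivity
  have hinv : HasDerivAt (fun t => 1 / alphaEx4 (t, y) - 1 / y)
      (-(y ^ 2 / 3 * ((1:ℝ)/3) * u x ^ ((1:ℝ)/3 - 1)) / alphaEx4 (x, y) ^ 2) x := by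
    simpa [one_div] using (hα.inv hαpos.ne').sub_const (1 / y)
  have hz : HasDerivAt (fun t => zEx4 (t, y))
      (-(Real.exp (1 / alphaEx4 (x, y) - 1 / y) *
        (-(y ^ 2 / 3 * ((1:ℝ)/3) * u x ^ ((1:ℝ)/3 - 1)) / alphaEx4 (x, y) ^ 2))) x := by
    simpa [zEx4] using hinv.exp.const_sub 1
  rw [zEx4x, hz.deriv]
  rw [hu_def]
  ring_nf

set_option maxHeartbeats 1000000 in
lemma zEx4x_lower {x y : ℝ} (hy : y ∈ Ioo (1/3:ℝ) (2/3))
    (hx : x ∈ Ioo (3*y-3) (3*y-3+(y-1/3)^3)) :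
    (8503056 * (y-1/3)^4)⁻¹ ≤ zEx4x (x, y) ^ 2 := by
  obtain ⟨hy1, hy2⟩ := hy
  obtain ⟨hx1, hx2⟩ := hx
  obtain ⟨ε, hε⟩ : ∃ ε : ℝ, ε = y - 1/3 := ⟨_, rfl⟩
  rw [← hε] at hx2 ⊢
  have hε0 : 0 < ε := by rw [hε]; linarith
  have hε3 : ε < 1/3 := by rw [hε]; linarith
  have h2ε : (0:ℝ) < 2*ε := by linarith
  have hukey : (x * y ^ 2 + y - 1/9) / 3 = ε^3 + (x - (3*y-3)) * y^2 / 3 := by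
    rw [hε]; ring
  have hupos : 0 < (x * y ^ 2 + y - 1/9) / 3 := by
    rw [hukey]
    have h1 : 0 < x - (3*y-3) := by linarith
    have h2 : (0:ℝ) < y^2 := by nlinarith
    positivity
  have huble : (x * y ^ 2 + y - 1/9) / 3 ≤ (2*ε)^3 := by
    rw [hukey]
    have h1 : x - (3*y-3) ≤ ε^3 := by linarith
    have h2 : y^2 ≤ 1 := by nlinarith
    have h3 : (x - (3*y-3)) * y^2 ≤ ε^3 := by
      calc (x - (3*y-3)) * y^2 ≤ (x - (3*y-3)) * 1 := by
            apply mul_le_mul_of_nonneg_left h2 (by linarith)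
        _ ≤ ε^3 := by linarith
    rw [show ((2*ε)^3 : ℝ) = 8*ε^3 from by ring]
    have h5 : (0:ℝ) < ε^3 := by positivity
    linarith
  -- rpow computations
  have hcube1 : ((2*ε)^3 : ℝ) ^ ((1:ℝ)/3 - 1) = ((2*ε)^2)⁻¹ := by
    rw [← Real.rpow_natCast (2*ε) 3, ← Real.rpow_mul h2ε.le]
    rw [show (((3:ℕ):ℝ) * ((1:ℝ)/3 - 1)) = -2 by norm_num, Real.rpow_neg h2ε.le]
    rw [Real.rpow_two]
  have hcube2 : ((2*ε)^3 : ℝ) ^ ((1:ℝ)/3) = 2*ε := by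
    rw [← Real.rpow_natCast (2*ε) 3, ← Real.rpow_mul h2ε.le]
    norm_num
  have hpw : ((2*ε)^2)⁻¹ ≤ ((x * y ^ 2 + y - 1/9) / 3) ^ ((1:ℝ)/3 - 1) := by
    rw [← hcube1]
    exact Real.rpow_le_rpow_of_nonpos hupos huble (by norm_num)
  -- alpha bounds
  have hαval := alphaEx4_eq hupos.le
  have hαle : alphaEx4 (x, y) ≤ 1 := by
    rw [hαval]
    have : ((x * y ^ 2 + y - 1/9) / 3) ^ ((1:ℝ)/3) ≤ 2*ε := by
      rw [← hcube2]
      exact Real.rpow_le_rpow hupos.le huble (by norm_num)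
    linarith
  have hαpos : 0 < alphaEx4 (x, y) := by
    rw [hαval]
    have := Real.rpow_nonneg hupos.le ((1:ℝ)/3)
    linarith
  -- exp bound
  have hexp : (1:ℝ)/9 ≤ Real.exp (1 / alphaEx4 (x, y) - 1 / y) := by
    have h1 : (1:ℝ) ≤ 1 / alphaEx4 (x, y) := by
      rw [le_div_iff₀ hαpos]; simpa using hαle
    have h2 : 1 / y ≤ 3 := by
      rw [div_le_iff₀ (by linarith)]; linarith
    have h3 : (-2:ℝ) ≤ 1 / alphaEx4 (x, y) - 1 / y := by linarith
    calc (1:ℝ)/9 ≤ Real.exp (-2) := by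
          rw [show (-2:ℝ) = -1 + -1 by norm_num, Real.exp_add]
          have h4 : Real.exp (-1) = (Real.exp 1)⁻¹ := by
            rw [Real.exp_neg]
          have h5 : Real.exp 1 < 3 := by
            have := Real.exp_one_lt_d9; linarith
          have h6 : 0 < Real.exp 1 := Real.exp_pos 1
          rw [h4]
          rw [show (1:ℝ)/9 = (3*3)⁻¹ by norm_num, ← mul_inv]
          apply inv_anti₀ (by positivity)
          nlinarith
      _ ≤ _ := Real.exp_le_exp.mpr h3
  -- main product bound
  rw [zEx4x_formula hupos]
  have hmain : (2916 * ε^2)⁻¹ ≤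
      Real.exp (1 / alphaEx4 (x, y) - 1 / y) *
        (y ^ 2 / 3 * ((1:ℝ)/3) * ((x * y ^ 2 + y - 1/9) / 3) ^ ((1:ℝ)/3 - 1)) /
        (alphaEx4 (x, y)) ^ 2 := by
    have hy2 : (1:ℝ)/9 ≤ y^2 := by nlinarith
    have hpw0 : (0:ℝ) < ((2*ε)^2)⁻¹ := by positivity
    have hP : (1/9 : ℝ) * (1/9/3 * (1/3) * ((2*ε)^2)⁻¹) ≤
        Real.exp (1 / alphaEx4 (x, y) - 1 / y) *
          (y ^ 2 / 3 * ((1:ℝ)/3) * ((x * y ^ 2 + y - 1/9) / 3) ^ ((1:ℝ)/3 - 1)) := by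
      apply mul_le_mul hexp ?_ ?_ (le_of_lt (Real.exp_pos _))
      · apply mul_le_mul ?_ hpw ?_ ?_
        · apply mul_le_mul_of_nonneg_right ?_ (by norm_num)
          linarith
        · positivity
        · positivity
      · positivity
    have hα2 : (alphaEx4 (x,y))^2 ≤ 1 := by nlinarith
    have hα2pos : 0 < (alphaEx4 (x,y))^2 := by positivity
    calc (2916 * ε^2)⁻¹ = (1/9 : ℝ) * (1/9/3 * (1/3) * ((2*ε)^2)⁻¹) := by
          field_simp; ring
      _ ≤ Real.exp (1 / alphaEx4 (x, y) - 1 / y) *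
          (y ^ 2 / 3 * ((1:ℝ)/3) * ((x * y ^ 2 + y - 1/9) / 3) ^ ((1:ℝ)/3 - 1)) := hP
      _ ≤ _ := by
          set E := Real.exp (1 / alphaEx4 (x, y) - 1 / y) *
            (y ^ 2 / 3 * ((1:ℝ)/3) * ((x * y ^ 2 + y - 1/9) / 3) ^ ((1:ℝ)/3 - 1)) with hE
          have hEpos : 0 ≤ E := le_trans (by positivity) hP
          rw [le_div_iff₀ hα2pos]
          calc E * alphaEx4 (x,y) ^ 2 ≤ E * 1 := mul_le_mul_of_nonneg_left hα2 hEpos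
            _ = E := mul_one E
  have h0 : (0:ℝ) ≤ (2916 * ε^2)⁻¹ := by positivity
  calc (8503056 * ε^4)⁻¹ = ((2916 * ε^2)⁻¹)^2 := by
        rw [inv_pow]; congr 1; ring
    _ ≤ _ := pow_le_pow_left₀ h0 hmain 2

/-! ### The divergent integral -/

lemma lint_inv_Ioo_top : ∫⁻ t in Ioo (0:ℝ) (1/3), ENNReal.ofReal t⁻¹ = ⊤ := by
  by_contra h
  have hint : IntegrableOn (fun t : ℝ => t⁻¹) (Ioo (0:ℝ) (1/3)) := by
    refine ⟨measurable_inv.aestronglyMeasurable.restrict, ?_⟩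
    rw [HasFiniteIntegral]
    have heq : ∫⁻ t in Ioo (0:ℝ) (1/3), ‖t⁻¹‖ₑ =
        ∫⁻ t in Ioo (0:ℝ) (1/3), ENNReal.ofReal t⁻¹ := by
      apply setLIntegral_congr_fun measurableSet_Ioo
      intro t ht
      exact Real.enorm_eq_ofReal (inv_nonneg.mpr ht.1.le)
    rw [heq]
    exact lt_top_iff_ne_top.mpr h
  have h2 : IntegrableOn (fun t : ℝ => t ^ (-1 : ℝ)) (Ioo (0:ℝ) (1/3)) := by
    apply hint.congr_fun ?_ measurableSet_Ioo
    intro t ht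
    simp [Real.rpow_neg_one]
  rw [intervalIntegral.integrableOn_Ioo_rpow_iff (by norm_num)] at h2
  norm_num at h2

lemma lint_inv_shift_top :
    ∫⁻ y in Ioo (1/3:ℝ) (2/3), ENNReal.ofReal ((y - 1/3)⁻¹) = ⊤ := by
  have mp := measurePreserving_add_right (volume : Measure ℝ) (1/3)
  have emb : MeasurableEmbedding (fun t : ℝ => t + 1/3) :=
    (MeasurableEquiv.addRight (1/3)).measurableEmbedding
  have key := mp.setLIntegral_comp_preimage_emb emb
    (fun y => ENNReal.ofReal ((y - 1/3)⁻¹)) (Ioo (1/3) (2/3))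
  have hpre : (fun t : ℝ => t + 1/3) ⁻¹' Ioo (1/3) (2/3) = Ioo 0 (1/3) := by
    ext t
    simp only [mem_preimage, mem_Ioo]
    constructor <;> intro ⟨a, b⟩ <;> constructor <;> linarith
  rw [hpre] at key
  rw [← key]
  simp only [add_sub_cancel_right]
  exact lint_inv_Ioo_top

/-! ### The region near the vertex A -/

def REx4 : Set (ℝ × ℝ) :=
  {p : ℝ × ℝ | (1/3 < p.2 ∧ p.2 < 2/3) ∧
    3 * p.2 - 3 < p.1 ∧ p.1 < 3 * p.2 - 3 + (p.2 - 1/3)^3}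

lemma REx4_meas : MeasurableSet REx4 := by
  apply MeasurableSet.inter
  · apply MeasurableSet.inter
    · exact measurableSet_lt measurable_const measurable_snd
    · exact measurableSet_lt measurable_snd measurable_const
  · apply MeasurableSet.inter
    · exact measurableSet_lt (by fun_prop) measurable_fst
    · exact measurableSet_lt measurable_fst (by fun_prop)

lemma REx4_subset : REx4 ⊆ TriangleEx4 := by
  rintro p ⟨⟨h1, h2⟩, h3, h4⟩
  refine ⟨h1, ?_, by linarith⟩
  have hc : (p.2 - 1/3)^3 < (1/3:ℝ)^3 := by
    apply pow_lt_pow_left₀ (by linarith) (by linarith)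
    norm_num
  · linarith
  
lemma aux_field {a : ℝ} (ha : a ≠ 0) :
    ((8503056 : ℝ) * a^4)⁻¹ * a^3 = (8503056:ℝ)⁻¹ * a⁻¹ := by
  field_simp

noncomputable def fEx4 : ℝ → ENNReal := fun y => ENNReal.ofReal ((8503056 * (y - 1/3)^4)⁻¹)

lemma fEx4_meas : Measurable fEx4 := by unfold fEx4; fun_prop

lemma lint_R_top : ∫⁻ p in REx4, fEx4 p.2 = ⊤ := by
  have hf : Measurable fun p : ℝ × ℝ => fEx4 p.2 := fEx4_meas.comp measurable_snd
  rw [← lintegral_indicator REx4_meas]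
  rw [Measure.volume_eq_prod]
  rw [lintegral_prod_symm _ ((hf.indicator REx4_meas).aemeasurable)]
  have hinner : ∀ y : ℝ, (∫⁻ x, REx4.indicator (fun p : ℝ × ℝ => fEx4 p.2) (x, y)) =
      (Ioo (1/3:ℝ) (2/3)).indicator
        (fun y => fEx4 y * ENNReal.ofReal ((y - 1/3)^3)) y := by
    intro y
    by_cases hy : y ∈ Ioo (1/3:ℝ) (2/3)
    · rw [indicator_of_mem hy]
      have heq : ∀ x : ℝ, REx4.indicator (fun p : ℝ × ℝ => fEx4 p.2) (x, y) =
          (Ioo (3*y-3) (3*y-3+(y-1/3)^3)).indicator (fun _ => fEx4 y) x := by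
        intro x
        by_cases hx : x ∈ Ioo (3*y-3) (3*y-3+(y-1/3)^3)
        · rw [indicator_of_mem hx]
          have : (x, y) ∈ REx4 := ⟨⟨hy.1, hy.2⟩, hx.1, hx.2⟩
          rw [indicator_of_mem this]
        · rw [indicator_of_notMem hx, indicator_of_notMem]
          intro hmem
          exact hx ⟨hmem.2.1, hmem.2.2⟩
      simp_rw [heq]
      rw [lintegral_indicator measurableSet_Ioo, setLIntegral_const,
        Real.volume_Ioo]
      congr 1
      ring_nf
    · rw [indicator_of_notMem hy]
      have heq : ∀ x : ℝ, REx4.indicator (fun p : ℝ × ℝ => fEx4 p.2) (x, y) = 0 := by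
        intro x
        apply indicator_of_notMem
        intro hmem
        exact hy ⟨hmem.1.1, hmem.1.2⟩
      simp_rw [heq]
      simp
  simp_rw [hinner]
  rw [lintegral_indicator measurableSet_Ioo]
  have hcongr : ∫⁻ y in Ioo (1/3:ℝ) (2/3), fEx4 y * ENNReal.ofReal ((y - 1/3)^3) =
      ∫⁻ y in Ioo (1/3:ℝ) (2/3),
        ENNReal.ofReal ((8503056:ℝ)⁻¹) * ENNReal.ofReal ((y - 1/3)⁻¹) := by
    apply setLIntegral_congr_fun measurableSet_Ioo
    intro y hy
    beta_reduce
    have hε0 : 0 < y - 1/3 := by linarith [hy.1]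
    rw [fEx4, ← ENNReal.ofReal_mul (by positivity), ← ENNReal.ofReal_mul (by positivity)]
    rw [aux_field hε0.ne']
  rw [hcongr, lintegral_const_mul' _ _ ENNReal.ofReal_ne_top, lint_inv_shift_top,
    ENNReal.mul_top]
  simp only [ne_eq, ENNReal.ofReal_eq_zero, not_le]
  norm_num

theorem stmt_6 :
    (∫⁻ p in TriangleEx4, ENNReal.ofReal ((zEx4x p) ^ 2) = ⊤) ∧
    ¬ IntegrableOn (fun p => (zEx4x p) ^ 2 + (zEx4y p) ^ 2) TriangleEx4 volume := by
  have h1 : ∫⁻ p in TriangleEx4, ENNReal.ofReal ((zEx4x p) ^ 2) = ⊤ := by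
    apply top_le_iff.mp
    calc (⊤ : ENNReal) = ∫⁻ p in REx4, fEx4 p.2 := lint_R_top.symm
      _ ≤ ∫⁻ p in REx4, ENNReal.ofReal ((zEx4x p) ^ 2) := by
          apply setLIntegral_mono' REx4_meas
          rintro p ⟨⟨h1, h2⟩, h3, h4⟩
          apply ENNReal.ofReal_le_ofReal
          have := zEx4x_lower (x := p.1) (y := p.2) ⟨h1, h2⟩ ⟨h3, h4⟩
          simpa using this
      _ ≤ _ := lintegral_mono_set REx4_subset
  refine ⟨h1, fun h => ?_⟩
  have hfin := h.2
  rw [HasFiniteIntegral] at hfin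
  have hle : ∫⁻ p in TriangleEx4, ENNReal.ofReal ((zEx4x p) ^ 2) ≤
      ∫⁻ p in TriangleEx4, ‖(zEx4x p) ^ 2 + (zEx4y p) ^ 2‖ₑ := by
    apply lintegral_mono
    intro p
    calc ENNReal.ofReal ((zEx4x p) ^ 2)
        ≤ ENNReal.ofReal ((zEx4x p) ^ 2 + (zEx4y p) ^ 2) :=
          ENNReal.ofReal_le_ofReal (le_add_of_nonneg_right (sq_nonneg _))
      _ ≤ _ := Real.ofReal_le_enorm _
  rw [h1] at hle
  exact (top_le_iff.mp hle ▸ hfin).false
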